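/- arXiv:2404.12661 — 3 statements merged into one kernel-verified Lean document; each statement's English description precedes it below -/
import Mathlib

section
/- The cross ratio ⟨x,z⟩⟨y,t⟩ / (⟨x,t⟩⟨y,z⟩) of four distinct isotropic lines in a regular 3-dimensional quadratic space is well-defined (independent of the choice of representative vectors, the denominators being nonzero) and invariant under any orthogonal transformation of the space. -/
open Module

lemma crossratio_key {K : Type*} [Field K]
    {E : Type*} [AddCommGroup E] [Module K E] [FiniteDimensional K E]
    (hdim : Module.finrank K E = 3)
    (B : LinearMap.BilinForm K E) (hsymm : B.IsSymm) (hnd : B.Nondegenerate)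
    (u v : E) (hu : u ≠ 0) (huu : B u u = 0) (hvv : B v v = 0)
    (huv : ¬∃ c : K, v = c • u) : B u v ≠ 0 := by
  intro h0
  have hvu : B v u = 0 := by
    have := hsymm.eq u v; simpa [h0] using this.symm
  -- u, v linearly independent
  have hind : LinearIndependent K ![u, v] := by
    rw [LinearIndependent.pair_iff]
    intro a b hab
    by_contra hc
    push_neg at hc
    rcases eq_or_ne b 0 with hb | hb
    · subst hb
      simp only [smul_zero, zero_smul, add_zero] at hab
      rcases smul_eq_zero.mp hab with ha | h
      · exact (hc ha).elim rfl
      · exact hu h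
    · apply huv
      refine ⟨-a / b, ?_⟩
      have : v = b⁻¹ • (b • v) := by rw [← mul_smul, inv_mul_cancel₀ hb, one_smul]
      rw [this]
      have hbv : b • v = -(a • u) := by linear_combination (norm := module) hab
      rw [hbv, div_eq_mul_inv, mul_comm, mul_smul]
      module
  set W : Submodule K E := Submodule.span K {u, v} with hW
  have hWdim : finrank K W = 2 := by
    rw [hW]
    have : ({u, v} : Set E) = Set.range ![u, v] := by
      simp [Set.range_comp, Matrix.range_cons, Matrix.range_empty]
      aesop
    rw [this, finrank_span_eq_card hind]
    simp
  have hrefl : B.IsRefl := hsymm.isRefl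
  have hle : W ≤ B.orthogonal W := by
    intro w hw
    rw [LinearMap.BilinForm.mem_orthogonal_iff]
    intro n hn
    rw [hW, Submodule.mem_span_pair] at hw hn
    obtain ⟨a, b, rfl⟩ := hw
    obtain ⟨c, d, rfl⟩ := hn
    simp only [LinearMap.BilinForm.IsOrtho, map_add, map_smul, LinearMap.add_apply,
      LinearMap.smul_apply, smul_eq_mul, huu, hvv, h0, hvu]
    ring
  have horth : finrank K (B.orthogonal W) = 1 := by
    rw [LinearMap.BilinForm.finrank_orthogonal hnd, hdim, hWdim]
  have := Submodule.finrank_mono hle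
  omega

/-- The cross ratio `⟨x,z⟩⟨y,t⟩ / (⟨x,t⟩⟨y,z⟩)` of four distinct isotropic lines
in a regular 3-dimensional quadratic space is well-defined (denominators
nonzero, independent of representatives) and invariant under any orthogonal
transformation. -/
theorem stmt_12 {K : Type*} [Field K] (h2 : (2 : K) ≠ 0)
    {E : Type*} [AddCommGroup E] [Module K E] [FiniteDimensional K E]
    (hdim : Module.finrank K E = 3)
    (B : LinearMap.BilinForm K E) (hsymm : B.IsSymm) (hnd : B.Nondegenerate)
    (x y z t : E) (hx : x ≠ 0) (hy : y ≠ 0) (hz : z ≠ 0) (ht : t ≠ 0)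
    (hxx : B x x = 0) (hyy : B y y = 0) (hzz : B z z = 0) (htt : B t t = 0)
    (hxy : ¬∃ c : K, y = c • x) (hxz : ¬∃ c : K, z = c • x)
    (hxt : ¬∃ c : K, t = c • x) (hyz : ¬∃ c : K, z = c • y)
    (hyt : ¬∃ c : K, t = c • y) (hzt : ¬∃ c : K, t = c • z) :
    B x t * B y z ≠ 0 ∧
      (∀ a b c d : K, a ≠ 0 → b ≠ 0 → c ≠ 0 → d ≠ 0 →
        B (a • x) (c • z) * B (b • y) (d • t)
            / (B (a • x) (d • t) * B (b • y) (c • z))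
          = B x z * B y t / (B x t * B y z)) ∧
      (∀ f : E ≃ₗ[K] E, (∀ v w : E, B (f v) (f w) = B v w) →
        B (f x) (f z) * B (f y) (f t) / (B (f x) (f t) * B (f y) (f z))
          = B x z * B y t / (B x t * B y z)) := by
  have hBxt := crossratio_key hdim B hsymm hnd x t hx hxx htt hxt
  have hByz := crossratio_key hdim B hsymm hnd y z hy hyy hzz hyz
  refine ⟨mul_ne_zero hBxt hByz, ?_, ?_⟩
  · intro a b c d ha hb hc hd
    simp only [map_smul, LinearMap.smul_apply, smul_eq_mul]
    field_simp
  · intro f hf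
    simp only [hf]
end

section
/- Any bijection of the projective line ℙ¹(K) over a field K of characteristic ≠ 2 preserving the square of the classical cross ratio of all quadruples of distinct points is a projective transformation (an element of PGL(2,K)). -/
/-- The determinant pairing of two vectors of `K²`; the classical cross ratio
of four points of `ℙ¹(K)` with representatives `x, y, z, t` is
`det(x,z)det(y,t) / (det(x,t)det(y,z))` (this handles `∞` uniformly). -/
def det2 {K : Type*} [Field K] (x y : Fin 2 → K) : K :=
  x 0 * y 1 - x 1 * y 0

section Helpers

variable {K : Type*} [Field K]

lemma vne_snd {a b : K} (h : b ≠ 0) : (![a, b] : Fin 2 → K) ≠ 0 := by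
  intro h0
  exact h (by simpa using congrFun h0 1)

lemma vne_fst {a b : K} (h : a ≠ 0) : (![a, b] : Fin 2 → K) ≠ 0 := by
  intro h0
  exact h (by simpa using congrFun h0 0)

lemma mk_eq_mk_iff_det2 {x y : Fin 2 → K} (hx : x ≠ 0) (hy : y ≠ 0) :
    Projectivization.mk K x hx = Projectivization.mk K y hy ↔ det2 x y = 0 := by
  rw [Projectivization.mk_eq_mk_iff]
  constructor
  · rintro ⟨a, rfl⟩
    simp only [det2, Pi.smul_apply, Units.smul_def, smul_eq_mul]
    ring
  · intro h
    have hy01 : y 0 ≠ 0 ∨ y 1 ≠ 0 := by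
      by_contra hc
      push_neg at hc
      exact hy (funext fun i => by fin_cases i <;> simp [hc.1, hc.2])
    rcases hy01 with h0 | h1
    · have hc : x 0 ≠ 0 := by
        intro hx0
        apply hx
        have hx1 : x 1 = 0 := by
          simp only [det2, hx0, zero_mul, zero_sub, neg_eq_zero, mul_eq_zero] at h
          tauto
        funext i; fin_cases i <;> simp [hx0, hx1]
      refine ⟨Units.mk0 (x 0 / y 0) (div_ne_zero hc h0), funext fun i => ?_⟩
      simp only [Units.smul_def, Units.val_mk0, Pi.smul_apply, smul_eq_mul]
      fin_cases i
      · simp only [Fin.zero_eta, Fin.mk_one]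
        field_simp
      · simp only [det2] at h
        simp only [Fin.zero_eta, Fin.mk_one]
        field_simp
        linear_combination h
    · have hc : x 1 ≠ 0 := by
        intro hx1
        apply hx
        have hx0 : x 0 = 0 := by
          simp only [det2, hx1, zero_mul, sub_zero, mul_eq_zero] at h
          tauto
        funext i; fin_cases i <;> simp [hx0, hx1]
      refine ⟨Units.mk0 (x 1 / y 1) (div_ne_zero hc h1), funext fun i => ?_⟩
      simp only [Units.smul_def, Units.val_mk0, Pi.smul_apply, smul_eq_mul]
      fin_cases i
      · simp only [det2] at h
        simp only [Fin.zero_eta, Fin.mk_one]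
        field_simp
        linear_combination -h
      · simp only [Fin.zero_eta, Fin.mk_one]
        field_simp

lemma mk_ne_mk_of_det2 {x y : Fin 2 → K} (hx : x ≠ 0) (hy : y ≠ 0)
    (h : det2 x y ≠ 0) :
    Projectivization.mk K x hx ≠ Projectivization.mk K y hy :=
  fun he => h ((mk_eq_mk_iff_det2 hx hy).mp he)

lemma det2_ne_of_mk_ne {x y : Fin 2 → K} (hx : x ≠ 0) (hy : y ≠ 0)
    (h : Projectivization.mk K x hx ≠ Projectivization.mk K y hy) :
    det2 x y ≠ 0 :=
  fun he => h ((mk_eq_mk_iff_det2 hx hy).mpr he)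

lemma decomp2 {u v : Fin 2 → K} (hD : det2 u v ≠ 0) (r : Fin 2 → K) :
    ∃ γ δ : K, r = γ • u + δ • v ∧ det2 r v = γ * det2 u v ∧
      det2 u r = δ * det2 u v := by
  have hD' : u 0 * v 1 - u 1 * v 0 ≠ 0 := by simpa [det2] using hD
  refine ⟨det2 r v / det2 u v, det2 u r / det2 u v, ?_,
    (div_mul_cancel₀ _ hD).symm, (div_mul_cancel₀ _ hD).symm⟩
  funext i
  fin_cases i <;>
  · simp only [Pi.add_apply, Pi.smul_apply, smul_eq_mul, det2, Fin.zero_eta, Fin.mk_one]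
    rw [div_mul_eq_mul_div, div_mul_eq_mul_div, ← add_div, eq_div_iff hD']
    ring

end Helpers

/-- Any bijection of the projective line `ℙ¹(K)` (char `K ≠ 2`) preserving the
square of the classical cross ratio of all distinct quadruples is a projective
transformation, i.e. induced by an invertible linear map of `K²`. -/
theorem stmt_15 {K : Type*} [Field K] (h2 : (2 : K) ≠ 0)
    (f : Projectivization K (Fin 2 → K) ≃ Projectivization K (Fin 2 → K))
    (hcr : ∀ (x y z t x' y' z' t' : Fin 2 → K)
      (hx : x ≠ 0) (hy : y ≠ 0) (hz : z ≠ 0) (ht : t ≠ 0)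
      (hx' : x' ≠ 0) (hy' : y' ≠ 0) (hz' : z' ≠ 0) (ht' : t' ≠ 0),
      Projectivization.mk K x hx ≠ Projectivization.mk K y hy →
      Projectivization.mk K x hx ≠ Projectivization.mk K z hz →
      Projectivization.mk K x hx ≠ Projectivization.mk K t ht →
      Projectivization.mk K y hy ≠ Projectivization.mk K z hz →
      Projectivization.mk K y hy ≠ Projectivization.mk K t ht →
      Projectivization.mk K z hz ≠ Projectivization.mk K t ht →
      f (Projectivization.mk K x hx) = Projectivization.mk K x' hx' →
      f (Projectivization.mk K y hy) = Projectivization.mk K y' hy' →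
      f (Projectivization.mk K z hz) = Projectivization.mk K z' hz' →
      f (Projectivization.mk K t ht) = Projectivization.mk K t' ht' →
      (det2 x' z' * det2 y' t' / (det2 x' t' * det2 y' z')) ^ 2
        = (det2 x z * det2 y t / (det2 x t * det2 y z)) ^ 2) :
    ∃ g : (Fin 2 → K) ≃ₗ[K] (Fin 2 → K),
      ∀ (v : Fin 2 → K) (hv : v ≠ 0),
        f (Projectivization.mk K v hv)
          = Projectivization.mk K (g v) (by
              simpa using (LinearEquiv.map_ne_zero_iff g).mpr hv) := by
  classical
  -- base points
  have h10 : (![1, 0] : Fin 2 → K) ≠ 0 := vne_fst one_ne_zero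
  have h01 : (![0, 1] : Fin 2 → K) ≠ 0 := vne_snd one_ne_zero
  have h11 : (![1, 1] : Fin 2 → K) ≠ 0 := vne_snd one_ne_zero
  set Pinf := Projectivization.mk K ![1, 0] h10 with hPinf
  set P0 := Projectivization.mk K ![0, 1] h01 with hP0
  set P1 := Projectivization.mk K ![1, 1] h11 with hP1
  have hinf0 : Pinf ≠ P0 := mk_ne_mk_of_det2 _ _ (by norm_num [det2])
  have hinf1 : Pinf ≠ P1 := mk_ne_mk_of_det2 _ _ (by norm_num [det2])
  have h01' : P0 ≠ P1 := mk_ne_mk_of_det2 _ _ (by norm_num [det2])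
  -- representatives of images
  set u := (f Pinf).rep with hu_def
  set v := (f P0).rep with hv_def
  set w := (f P1).rep with hw_def
  have hu : u ≠ 0 := Projectivization.rep_nonzero _
  have hv : v ≠ 0 := Projectivization.rep_nonzero _
  have hw : w ≠ 0 := Projectivization.rep_nonzero _
  have hfu : f Pinf = Projectivization.mk K u hu := (Projectivization.mk_rep _).symm
  have hfv : f P0 = Projectivization.mk K v hv := (Projectivization.mk_rep _).symm
  have hfw : f P1 = Projectivization.mk K w hw := (Projectivization.mk_rep _).symm
  -- the basis u, v
  have hmuv : Projectivization.mk K u hu ≠ Projectivization.mk K v hv := by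
    rw [← hfu, ← hfv]; exact fun h => hinf0 (f.injective h)
  have hmwv : Projectivization.mk K w hw ≠ Projectivization.mk K v hv := by
    rw [← hfw, ← hfv]; exact fun h => h01' (f.injective h.symm)
  have hmuw : Projectivization.mk K u hu ≠ Projectivization.mk K w hw := by
    rw [← hfu, ← hfw]; exact fun h => hinf1 (f.injective h)
  have hD : det2 u v ≠ 0 := det2_ne_of_mk_ne hu hv hmuv
  obtain ⟨α, β, hwd, hwv, huw⟩ := decomp2 hD w
  have hα : α ≠ 0 := by
    intro h0
    exact det2_ne_of_mk_ne hw hv hmwv (by rw [hwv, h0, zero_mul])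
  have hβ : β ≠ 0 := by
    intro h0
    exact det2_ne_of_mk_ne hu hw hmuw (by rw [huw, h0, zero_mul])
  -- the matrix and the linear equivalence
  set M : Matrix (Fin 2) (Fin 2) K := !![α * u 0, β * v 0; α * u 1, β * v 1] with hM
  have hdet : M.det = α * β * det2 u v := by
    simp [hM, Matrix.det_fin_two_of, det2]; ring
  have hMinv : Invertible M :=
    M.invertibleOfIsUnitDet (isUnit_iff_ne_zero.mpr
      (hdet ▸ mul_ne_zero (mul_ne_zero hα hβ) hD))
  set g := M.toLinearEquiv' hMinv with hg
  have hgapp : ∀ z : Fin 2 → K,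
      g z = ![α * u 0 * z 0 + β * v 0 * z 1, α * u 1 * z 0 + β * v 1 * z 1] := by
    intro z
    have : g z = M.mulVec z := by
      rw [hg]
      rfl
    rw [this]
    funext i
    fin_cases i <;>
      simp [hM, Matrix.mulVec, dotProduct, Fin.sum_univ_two]
  refine ⟨g, ?_⟩
  -- main claim for affine points
  have key : ∀ (x : K) (hgx : g ![x, 1] ≠ 0),
      f (Projectivization.mk K ![x, 1] (vne_snd one_ne_zero))
        = Projectivization.mk K (g ![x, 1]) hgx := by
    intro x hgx
    by_cases hx0 : x = 0
    · subst hx0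
      rw [← hP0, hfv]
      refine (mk_eq_mk_iff_det2 hv hgx).mpr ?_
      rw [hgapp]
      simp [det2]
      ring
    by_cases hx1 : x = 1
    · subst hx1
      rw [← hP1, hfw]
      refine (mk_eq_mk_iff_det2 hw hgx).mpr ?_
      rw [hgapp, hwd]
      simp [det2]
      ring
    -- the generic case
    have hxv : (![x, 1] : Fin 2 → K) ≠ 0 := vne_snd one_ne_zero
    set Px := Projectivization.mk K ![x, 1] hxv with hPx
    have hx_0 : Px ≠ P0 := mk_ne_mk_of_det2 _ _ (by simpa [det2] using hx0)
    have hx_1 : Px ≠ P1 := mk_ne_mk_of_det2 _ _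
      (by simpa [det2] using sub_ne_zero.mpr hx1)
    have hx_inf : Px ≠ Pinf := mk_ne_mk_of_det2 _ _ (by norm_num [det2])
    set r := (f Px).rep with hr_def
    have hr : r ≠ 0 := Projectivization.rep_nonzero _
    have hfr : f Px = Projectivization.mk K r hr := (Projectivization.mk_rep _).symm
    have hmrv : Projectivization.mk K r hr ≠ Projectivization.mk K v hv := by
      rw [← hfr, ← hfv]; exact fun h => hx_0 (f.injective h)
    have hmrw : Projectivization.mk K r hr ≠ Projectivization.mk K w hw := by
      rw [← hfr, ← hfw]; exact fun h => hx_1 (f.injective h)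
    have hmru : Projectivization.mk K r hr ≠ Projectivization.mk K u hu := by
      rw [← hfr, ← hfu]; exact fun h => hx_inf (f.injective h)
    obtain ⟨γ, δ, hrd, hrv, hur⟩ := decomp2 hD r
    have hδ : δ ≠ 0 := by
      intro h0
      apply det2_ne_of_mk_ne hr hu hmru
      have : det2 u r = 0 := by rw [hur, h0, zero_mul]
      simp only [det2] at this ⊢
      linear_combination -this
    -- auxiliary det2 values
    have hru : det2 r u = -(δ * det2 u v) := by
      simp only [det2] at hur ⊢
      linear_combination -hur
    have hwu : det2 w u = -(β * det2 u v) := by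
      simp only [det2] at huw ⊢
      linear_combination -huw
    have hrw : det2 r w = (γ * β - δ * α) * det2 u v := by
      rw [hrd, hwd]
      simp only [det2, Pi.add_apply, Pi.smul_apply, smul_eq_mul]
      ring
    have hvu : det2 v u = -det2 u v := by simp only [det2]; ring
    have hvw : det2 v w = -(α * det2 u v) := by
      rw [hwd]
      simp only [det2, Pi.add_apply, Pi.smul_apply, smul_eq_mul]
      ring
    -- first cross ratio: (x, 1; 0, ∞)
    have e1 := hcr ![x, 1] ![1, 1] ![0, 1] ![1, 0] r w v u
      hxv h11 h01 h10 hr hw hv hu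
      hx_1 hx_0 hx_inf (Ne.symm h01') (Ne.symm hinf1) (Ne.symm hinf0)
      hfr hfw hfv hfu
    rw [hrv, hwu, hru, hwv] at e1
    have hnum1 : det2 ![x, 1] ![0, 1] * det2 ![1, 1] ![1, 0]
        / (det2 ![x, 1] ![1, 0] * det2 ![1, 1] ![0, 1]) = x := by
      norm_num [det2]
    rw [hnum1] at e1
    have e1' : (γ * β) ^ 2 = x ^ 2 * (δ * α) ^ 2 := by
      have hcl : (γ * β) ^ 2 * (det2 u v) ^ 4
          = (x ^ 2 * (δ * α) ^ 2) * (det2 u v) ^ 4 := by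
        have hden : -(δ * det2 u v) * (α * det2 u v) ≠ 0 :=
          mul_ne_zero (neg_ne_zero.mpr (mul_ne_zero hδ hD)) (mul_ne_zero hα hD)
        field_simp at e1
        linear_combination e1 * det2 u v ^ 4
      exact mul_right_cancel₀ (pow_ne_zero 4 hD) hcl
    -- second cross ratio: (x, 0; 1, ∞)
    have e2 := hcr ![x, 1] ![0, 1] ![1, 1] ![1, 0] r v w u
      hxv h01 h11 h10 hr hv hw hu
      hx_0 hx_1 hx_inf h01' (Ne.symm hinf0) (Ne.symm hinf1)
      hfr hfv hfw hfu
    rw [hrw, hvu, hru, hvw] at e2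
    have hnum2 : det2 ![x, 1] ![1, 1] * det2 ![0, 1] ![1, 0]
        / (det2 ![x, 1] ![1, 0] * det2 ![0, 1] ![1, 1]) = 1 - x := by
      norm_num [det2]
    rw [hnum2] at e2
    have e2' : (γ * β - δ * α) ^ 2 = (1 - x) ^ 2 * (δ * α) ^ 2 := by
      have hcl : (γ * β - δ * α) ^ 2 * (det2 u v) ^ 4
          = ((1 - x) ^ 2 * (δ * α) ^ 2) * (det2 u v) ^ 4 := by
        field_simp at e2
        linear_combination e2 * det2 u v ^ 4
      exact mul_right_cancel₀ (pow_ne_zero 4 hD) hcl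
    -- conclude γβ = x δα
    have hkey : γ * β = x * (δ * α) := by
      have h3 : (2 * (δ * α)) * (γ * β - x * (δ * α)) = 0 := by
        linear_combination e1' - e2'
      rcases mul_eq_zero.mp h3 with h4 | h4
      · exact absurd h4 (mul_ne_zero h2 (mul_ne_zero hδ hα))
      · exact sub_eq_zero.mp h4
    rw [hfr]
    refine (mk_eq_mk_iff_det2 hr hgx).mpr ?_
    have : det2 r (g ![x, 1]) = (γ * β - x * (δ * α)) * det2 u v := by
      rw [hrd, hgapp]
      simp only [det2, Pi.add_apply, Pi.smul_apply, smul_eq_mul]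
      simp
      ring
    rw [this, hkey]
    ring
  -- now the general point
  intro z hz
  by_cases hz1 : z 1 = 0
  · have hz0 : z 0 ≠ 0 := by
      intro h0
      exact hz (funext fun i => by fin_cases i <;> simp [h0, hz1])
    have hzinf : Projectivization.mk K z hz = Pinf :=
      (mk_eq_mk_iff_det2 hz h10).mpr (by simp [det2, hz1])
    rw [hzinf, hfu]
    refine (mk_eq_mk_iff_det2 hu _).mpr ?_
    rw [hgapp]
    simp [det2, hz1]
    ring
  · set x := z 0 / z 1 with hx_def
    have hxv : (![x, 1] : Fin 2 → K) ≠ 0 := vne_snd one_ne_zero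
    have hzx : Projectivization.mk K z hz = Projectivization.mk K ![x, 1] hxv := by
      refine (mk_eq_mk_iff_det2 hz hxv).mpr ?_
      simp [det2, hx_def]
      field_simp
      simp
    have hgx : g ![x, 1] ≠ 0 := by
      simpa using (LinearEquiv.map_ne_zero_iff g).mpr hxv
    rw [hzx, key x hgx]
    refine (mk_eq_mk_iff_det2 hgx _).mpr ?_
    have hzv : z = z 1 • ![x, 1] := by
      funext i
      fin_cases i
      · simp only [Pi.smul_apply, Fin.zero_eta, Matrix.cons_val_zero, smul_eq_mul, hx_def]
        field_simp
      · simp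
    rw [hzv, map_smul]
    simp only [det2, Pi.smul_apply, smul_eq_mul]
    ring
end

section
/- Let p be a nonisotropic cycle and u, v ∈ K distinct elements such that the reflection σ_p maps the isotropic line of qᵤ = X²−2uX+u² to the isotropic line of q_v = X²−2vX+v². Then the cycle (X−u)(X−v) is orthogonal to p under the cycle pairing: ⟨p, X² − (u+v)X + uv⟩ = 0. -/
def cyclePair {K : Type*} [Field K] (p q : K × K × K) : K :=
  p.2.1 * q.2.1 - 2 * p.1 * q.2.2 - 2 * q.1 * p.2.2

/-- If the reflection in a nonisotropic cycle `p` maps the isotropic line of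
`qᵤ` to the isotropic line of `q_v` (for distinct `u, v`), then the cycle
`(X − u)(X − v)` is orthogonal to `p`. -/
theorem stmt_18 {K : Type*} [Field K] (h2 : (2 : K) ≠ 0)
    (p : K × K × K) (hp : cyclePair p p ≠ 0) (u v : K) (huv : u ≠ v)
    (hrefl : ∃ e : K, e ≠ 0 ∧
      ((1 : K), -2 * u, u ^ 2)
          - (2 * cyclePair ((1 : K), -2 * u, u ^ 2) p / cyclePair p p) • p
        = e • ((1 : K), -2 * v, v ^ 2)) :
    cyclePair p ((1 : K), -(u + v), u * v) = 0 := by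
  obtain ⟨a, b, c⟩ := p
  simp only [cyclePair] at *
  obtain ⟨e, he, heq⟩ := hrefl
  rw [Prod.ext_iff, Prod.ext_iff] at heq
  simp only [Prod.smul_mk, Prod.mk_sub_mk, Prod.fst, Prod.snd, smul_eq_mul] at heq
  obtain ⟨h1, h2', h3⟩ := heq
  -- eliminate e, clear denominators
  rw [mul_one e] at h1
  rw [← h1] at h2' h3
  have hD : b ^ 2 - 2 * c * a - 2 * c * a ≠ 0 := by
    intro h; apply hp; linear_combination h
  field_simp at h2' h3
  -- hA : (v-u)*D = -2 f(u)(b+2av);  hB : (u²-v²)*D = -4 f(u)(c-av²)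
  have hA : 2 * (v - u) * (b * b - 2 * a * c - 2 * a * c)
      = -4 * (a * u ^ 2 + b * u + c) * (b + 2 * a * v) := by
    linear_combination 2 * h2'
  have hB : (u ^ 2 - v ^ 2) * (b * b - 2 * a * c - 2 * a * c)
      = -4 * (a * u ^ 2 + b * u + c) * (c - a * v ^ 2) := by
    linear_combination h3
  have hfu : a * u ^ 2 + b * u + c ≠ 0 := by
    intro h0
    apply huv
    have : 2 * (v - u) * (b * b - 2 * a * c - 2 * a * c) = 0 := by
      rw [hA, h0]; ring
    have := (mul_eq_zero.mp ((mul_eq_zero.mp this).resolve_right hp)).resolve_left h2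
    exact (sub_eq_zero.mp this).symm
  have key : (2 * (2 * (a * u ^ 2 + b * u + c))) *
      (b * -(u + v) - 2 * a * (u * v) - 2 * 1 * c) = 0 := by
    linear_combination (-(u + v)) * hA - 2 * hB
  rcases mul_eq_zero.mp key with h | h
  · exact absurd h (mul_ne_zero h2 (mul_ne_zero h2 hfu))
  · exact h
end
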